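/- Let {p^k} be a sequence in a real Hilbert space generated by p̂^k = p^k + α_k(p^k − p^{k−1}) and p^{k+1} = p̂^k − (β_k max{0, φ_k(p̂^k)}/‖∇φ_k‖²)∇φ_k, where each φ_k is affine with ∇φ_k ≠ 0 and φ_k ≤ 0 on a nonempty closed convex set S, 0 ≤ α_k ≤ α < 1, 0 < β_lower ≤ β_k ≤ β_upper < 2, and p⁰ = p^{−1}. If ∑_{k=0}^∞ α_k‖p^k − p^{k−1}‖² < ∞, then max{0, φ_k(p̂^k)}/‖∇φ_k‖ → 0 as k → ∞. -/

import Mathlib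

open Filter RealInnerProductSpace

/-- Inertial-relaxed linear separator-projection method. `p (k-1)` uses truncated
subtraction, so at `k = 0` it equals `p 0`, encoding `p⁰ = p^{-1}`. -/
theorem stmt19 {H : Type*} [NormedAddCommGroup H] [InnerProductSpace ℝ H] [CompleteSpace H]
    (S : Set H) (hSne : S.Nonempty) (hScl : IsClosed S) (hScv : Convex ℝ S)
    (g : ℕ → H) (hg : ∀ k, g k ≠ 0) (c : ℕ → ℝ)
    (φ : ℕ → H → ℝ) (hφ : ∀ k z, φ k z = ⟪g k, z⟫ + c k)
    (hneg : ∀ k, ∀ q ∈ S, φ k q ≤ 0)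
    (α β : ℕ → ℝ) (a blo bup : ℝ)
    (hα : ∀ k, 0 ≤ α k ∧ α k ≤ a) (ha : a < 1)
    (hβ : ∀ k, blo ≤ β k ∧ β k ≤ bup) (hblo : 0 < blo) (hbup : bup < 2)
    (p phat : ℕ → H)
    (hphat : ∀ k, phat k = p k + α k • (p k - p (k - 1)))
    (hstep : ∀ k, p (k + 1)
      = phat k - (β k * max 0 (φ k (phat k)) / ‖g k‖ ^ 2) • g k)
    (hsum : Summable (fun k => α k * ‖p k - p (k - 1)‖ ^ 2)) :
    Tendsto (fun k => max 0 (φ k (phat k)) / ‖g k‖) atTop (nhds 0) := by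
  obtain ⟨q, hq⟩ := hSne
  have ha0 : 0 ≤ a := le_trans (hα 0).1 (hα 0).2
  set d : ℕ → ℝ := fun k => max 0 (φ k (phat k)) / ‖g k‖ with hd
  set u : ℕ → ℝ := fun k => ‖p k - q‖ ^ 2 with hu
  set s : ℕ → ℝ := fun k => β k * (2 - β k) * d k ^ 2 with hs
  set δ : ℕ → ℝ := fun k => 2 * (α k * ‖p k - p (k - 1)‖ ^ 2) with hδ
  set θ : ℕ → ℝ := fun k => max 0 (u k - u (k - 1)) with hθ
  have hgn : ∀ k, (0:ℝ) < ‖g k‖ := fun k => norm_pos_iff.mpr (hg k)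
  have hd0 : ∀ k, 0 ≤ d k := fun k => div_nonneg (le_max_left _ _) (norm_nonneg _)
  have hs0 : ∀ k, 0 ≤ s k := by
    intro k
    have h1 := (hβ k).1; have h2 := (hβ k).2
    simp only [hs]
    exact mul_nonneg (mul_nonneg (by linarith) (by linarith)) (sq_nonneg _)
  have hδ0 : ∀ k, 0 ≤ δ k := by
    intro k
    have := (hα k).1
    positivity
  have hθ0 : ∀ k, 0 ≤ θ k := fun k => le_max_left _ _
  have hu0 : ∀ k, 0 ≤ u k := fun k => sq_nonneg _
  -- key inequality
  have key : ∀ k, u (k + 1) + s k ≤ u k + α k * (u k - u (k - 1)) + δ k := by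
    intro k
    have hne : ‖g k‖ ≠ 0 := (hgn k).ne'
    have hg2 : (0:ℝ) < ‖g k‖ ^ 2 := pow_pos (hgn k) 2
    set t : ℝ := β k * max 0 (φ k (phat k)) / ‖g k‖ ^ 2 with htdef
    set M : ℝ := max 0 (φ k (phat k)) with hM
    -- expansion of u (k+1)
    have hexp : u (k + 1)
        = ‖phat k - q‖ ^ 2 - 2 * t * ⟪g k, phat k - q⟫ + t ^ 2 * ‖g k‖ ^ 2 := by
      have h0 : p (k + 1) - q = (phat k - q) - t • g k := by
        rw [hstep k]; abel
      have := norm_sub_sq_real (phat k - q) (t • g k)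
      rw [hu]
      simp only [h0]
      rw [this, real_inner_smul_right, norm_smul, real_inner_comm]
      simp [mul_pow, sq_abs]
      ring
    have htG : t * ‖g k‖ = β k * d k := by
      rw [htdef, hd]
      field_simp
      rw [hM]
    have hMd : M = d k * ‖g k‖ := by
      rw [hM, hd]
      simp only
      rw [div_mul_cancel₀ _ hne]
    -- projection decrease
    have hproj : u (k + 1) ≤ ‖phat k - q‖ ^ 2 - s k := by
      have hIP : t * ⟪g k, phat k - q⟫ ≥ t * M := by
        rcases le_or_gt (φ k (phat k)) 0 with hc | hc
        · have ht0 : t = 0 := by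
            rw [htdef, hM, max_eq_left hc]; simp
          rw [ht0]; simp
        · have hMe : M = φ k (phat k) := max_eq_right hc.le
          have ht0 : 0 ≤ t := by
            have := (hβ k).1
            have : 0 ≤ β k := by linarith
            rw [htdef]; positivity
          have hip : ⟪g k, phat k - q⟫ = φ k (phat k) - φ k q := by
            rw [hφ k (phat k), hφ k q, inner_sub_right]; ring
          have hφq := hneg k q hq
          have : ⟪g k, phat k - q⟫ ≥ M := by rw [hip, hMe]; linarith
          exact mul_le_mul_of_nonneg_left this ht0
      have hb1 := (hβ k).1
      have hb2 := (hβ k).2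
      have hdk := hd0 k
      -- t^2 * G^2 = (β d)^2, t * M = β d^2
      have htM : t * M = β k * d k ^ 2 := by
        rw [hMd]
        calc t * (d k * ‖g k‖) = (t * ‖g k‖) * d k := by ring
        _ = β k * d k ^ 2 := by rw [htG]; ring
      have ht2 : t ^ 2 * ‖g k‖ ^ 2 = (β k * d k) ^ 2 := by
        calc t ^ 2 * ‖g k‖ ^ 2 = (t * ‖g k‖) ^ 2 := by ring
        _ = (β k * d k) ^ 2 := by rw [htG]
      rw [hexp, ht2]
      simp only [hs]
      nlinarith [hIP, htM]
    -- inertial expansion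
    have hhat : ‖phat k - q‖ ^ 2 ≤ u k + α k * (u k - u (k - 1)) + δ k := by
      have hy : phat k - q = (p k - q) + α k • (p k - p (k - 1)) := by
        rw [hphat k]; abel
      have h2 : ‖(p k - q) + α k • (p k - p (k - 1))‖ ^ 2
          = ‖p k - q‖ ^ 2 + 2 * α k * ⟪p k - q, p k - p (k - 1)⟫
            + α k ^ 2 * ‖p k - p (k - 1)‖ ^ 2 := by
        rw [norm_add_sq_real, real_inner_smul_right, norm_smul]
        simp [mul_pow, sq_abs]
        ring
      have h3 : 2 * ⟪p k - q, p k - p (k - 1)⟫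
          = ‖p k - q‖ ^ 2 + ‖p k - p (k - 1)‖ ^ 2 - ‖p (k - 1) - q‖ ^ 2 := by
        have h := norm_sub_sq_real (p k - q) (p k - p (k - 1))
        have he : (p k - q) - (p k - p (k - 1)) = p (k - 1) - q := by abel
        rw [he] at h
        linarith
      have hak1 := (hα k).1
      have hak2 := (hα k).2
      have haa : α k ^ 2 ≤ α k := by nlinarith
      rw [hy, h2]
      simp only [hu, hδ]
      nlinarith [sq_nonneg ‖p k - p (k - 1)‖]
    linarith
  -- θ recursion
  have hθrec : ∀ k, θ (k + 1) ≤ a * θ k + δ k := by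
    intro k
    have h1 : u (k + 1) - u k ≤ a * θ k + δ k := by
      have h2 : α k * (u k - u (k - 1)) ≤ a * θ k := by
        have := mul_le_mul_of_nonneg_left (le_max_right 0 (u k - u (k - 1))) (hα k).1
        have h3 : α k * θ k ≤ a * θ k := mul_le_mul_of_nonneg_right (hα k).2 (hθ0 k)
        calc α k * (u k - u (k - 1)) ≤ α k * θ k := this
        _ ≤ a * θ k := h3
      have := key k
      have := hs0 k
      linarith
    have hrhs : 0 ≤ a * θ k + δ k := by
      have := mul_nonneg ha0 (hθ0 k)
      have := hδ0 k
      linarith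
    simp only [hθ, Nat.add_sub_cancel]
    exact max_le hrhs h1
  have hθzero : θ 0 = 0 := by simp [hθ]
  set D : ℝ := ∑' k, δ k with hD
  have hδsum : Summable δ := by
    have := hsum.mul_left 2
    simpa [hδ] using this
  have hDbound : ∀ n, ∑ k ∈ Finset.range n, δ k ≤ D :=
    fun n => Summable.sum_le_tsum _ (fun i _ => hδ0 i) hδsum
  have hD0 : 0 ≤ D := tsum_nonneg hδ0
  have h1a : (0:ℝ) < 1 - a := by linarith
  -- θ partial sums bounded
  have hT : ∀ n, ∑ k ∈ Finset.range n, θ k ≤ D / (1 - a) := by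
    intro n
    have hstep2 : ∑ k ∈ Finset.range (n + 1), θ k
        ≤ a * ∑ k ∈ Finset.range n, θ k + D := by
      rw [Finset.sum_range_succ']
      rw [hθzero, add_zero]
      calc ∑ i ∈ Finset.range n, θ (i + 1)
          ≤ ∑ i ∈ Finset.range n, (a * θ i + δ i) :=
            Finset.sum_le_sum (fun i _ => hθrec i)
        _ = a * ∑ i ∈ Finset.range n, θ i + ∑ i ∈ Finset.range n, δ i := by
            rw [Finset.sum_add_distrib, Finset.mul_sum]
        _ ≤ a * ∑ i ∈ Finset.range n, θ i + D := by linarith [hDbound n]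
    have hmono : ∑ k ∈ Finset.range n, θ k ≤ ∑ k ∈ Finset.range (n + 1), θ k := by
      rw [Finset.sum_range_succ]
      linarith [hθ0 n]
    rw [le_div_iff₀ h1a]
    nlinarith
  -- s partial sums bounded
  have hSb : ∀ n, ∑ k ∈ Finset.range n, s k ≤ u 0 + a * (D / (1 - a)) + D := by
    intro n
    have hsk : ∀ k, s k ≤ (u k - u (k + 1)) + a * θ k + δ k := by
      intro k
      have h2 : α k * (u k - u (k - 1)) ≤ a * θ k := by
        have h1 := mul_le_mul_of_nonneg_left (le_max_right 0 (u k - u (k - 1))) (hα k).1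
        have h3 : α k * θ k ≤ a * θ k := mul_le_mul_of_nonneg_right (hα k).2 (hθ0 k)
        linarith
      have := key k
      linarith
    calc ∑ k ∈ Finset.range n, s k
        ≤ ∑ k ∈ Finset.range n, ((u k - u (k + 1)) + a * θ k + δ k) :=
          Finset.sum_le_sum (fun k _ => hsk k)
      _ = (u 0 - u n) + a * ∑ k ∈ Finset.range n, θ k
          + ∑ k ∈ Finset.range n, δ k := by
          rw [Finset.sum_add_distrib, Finset.sum_add_distrib, Finset.sum_range_sub',
            Finset.mul_sum]
      _ ≤ u 0 + a * (D / (1 - a)) + D := by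
          have h1 := hu0 n
          have h2 := hT n
          have h3 := hDbound n
          have h4 : a * ∑ k ∈ Finset.range n, θ k ≤ a * (D / (1 - a)) :=
            mul_le_mul_of_nonneg_left h2 ha0
          linarith
  have hssum : Summable s :=
    summable_of_sum_range_le hs0 hSb
  have hstend : Tendsto s atTop (nhds 0) := hssum.tendsto_atTop_zero
  set C : ℝ := blo * (2 - bup) with hC
  have hC0 : 0 < C := by rw [hC]; nlinarith
  have hsd : ∀ k, d k ^ 2 ≤ s k / C := by
    intro k
    rw [le_div_iff₀ hC0]
    have h1 := (hβ k).1; have h2 := (hβ k).2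
    simp only [hs, hC]
    nlinarith [mul_nonneg (mul_nonneg (by linarith : (0:ℝ) ≤ β k - blo)
        (by linarith : (0:ℝ) ≤ 2 - β k)) (sq_nonneg (d k)),
      mul_nonneg (mul_nonneg (by linarith : (0:ℝ) ≤ blo)
        (by linarith : (0:ℝ) ≤ bup - β k)) (sq_nonneg (d k))]
  have hd2 : Tendsto (fun k => d k ^ 2) atTop (nhds 0) := by
    have hdiv : Tendsto (fun k => s k / C) atTop (nhds 0) := by
      simpa using hstend.div_const C
    exact squeeze_zero (fun k => sq_nonneg _) hsd hdiv
  have hfinal : Tendsto (fun k => Real.sqrt (d k ^ 2)) atTop (nhds 0) := by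
    have := (Real.continuous_sqrt.tendsto 0).comp hd2
    simpa [Function.comp_def] using this
  have : (fun k => Real.sqrt (d k ^ 2)) = d := by
    funext k
    exact Real.sqrt_sq (hd0 k)
  rw [this] at hfinal
  exact hfinal
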